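/- arXiv:1707.00523 — 3 statements merged into one kernel-verified Lean document; each statement's English description precedes it below -/
import Mathlib

section
/- For all real λ > 0, β > 0, t ≥ 0, every integer n ≥ 1 and every integer p ≥ 1, ∫₀^∞ s^p · λ e^{-β t - λ s} Σ_{k=1}^{n} (β t)^{k-1} Φ(n, k, λ s (β t)^n) ds = e^{-β t} · (p!/λ^p) · Σ_{k=1}^{n} (β t)^{k-1} E^{p+1}_{n,k}((β t)^n). -/
open Real MeasureTheory Filter Finset

/-- Wright function `Φ(ρ, δ, z) = Σ_{j≥0} z^j / (j! Γ(ρ j + δ))`. -/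
noncomputable def wright (ρ δ z : ℝ) : ℝ :=
  ∑' j : ℕ, z ^ j / ((Nat.factorial j : ℝ) * Real.Gamma (ρ * (j : ℝ) + δ))

/-- Wright function with second parameter 0:
`Φ(ρ, 0, z) = Σ_{j≥1} z^j / (j! Γ(ρ j))`. -/
noncomputable def wright0 (ρ z : ℝ) : ℝ :=
  ∑' j : ℕ, z ^ (j + 1) /
    ((Nat.factorial (j + 1) : ℝ) * Real.Gamma (ρ * ((j : ℝ) + 1)))

/-- Two-parameter Mittag-Leffler function `E_{ρ,δ}(z) = Σ_{j≥0} z^j / Γ(ρ j + δ)`. -/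
noncomputable def ml2 (ρ δ z : ℝ) : ℝ :=
  ∑' j : ℕ, z ^ j / Real.Gamma (ρ * (j : ℝ) + δ)

/-- Three-parameter generalized Mittag-Leffler function
`E^γ_{ρ,δ}(z) = Σ_{j≥0} (Γ(γ+j)/Γ(γ)) z^j / (j! Γ(ρ j + δ))`. -/
noncomputable def ml3 (γ ρ δ z : ℝ) : ℝ :=
  ∑' j : ℕ, (Real.Gamma (γ + (j : ℝ)) / Real.Gamma γ) * z ^ j /
    ((Nat.factorial j : ℝ) * Real.Gamma (ρ * (j : ℝ) + δ))

/-- Modified Bessel function of the first kind of order 0: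
`I₀(z) = Σ_{j≥0} (z/2)^{2j} / (j!)²`. -/
noncomputable def besselI0 (z : ℝ) : ℝ :=
  ∑' j : ℕ, (z / 2) ^ (2 * j) / ((Nat.factorial j : ℝ) * (Nat.factorial j : ℝ))

lemma aux_integral (m : ℕ) {b : ℝ} (hb : 0 < b) :
    ∫ s in Set.Ioi (0:ℝ), s ^ m * Real.exp (-(b * s))
      = (Nat.factorial m : ℝ) / b ^ (m + 1) := by
  have h : ∫ s in Set.Ioi (0:ℝ), s ^ ((m:ℝ) + 1 - 1) * Real.exp (-(b * s))
      = (1 / b) ^ ((m:ℝ) + 1) * Real.Gamma ((m:ℝ) + 1) :=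
    Real.integral_rpow_mul_exp_neg_mul_Ioi (by positivity) hb
  rw [show ((m:ℝ) + 1 - 1) = ((m:ℕ):ℝ) by ring] at h
  simp_rw [Real.rpow_natCast] at h
  rw [h, Real.Gamma_nat_eq_factorial,
    show ((m:ℝ) + 1) = ((m + 1 : ℕ):ℝ) by push_cast; ring,
    Real.rpow_natCast, div_pow, one_pow, one_div, inv_mul_eq_div]

lemma aux_integrable (m : ℕ) {b : ℝ} (hb : 0 < b) :
    IntegrableOn (fun s : ℝ => s ^ m * Real.exp (-(b * s))) (Set.Ioi 0) := by
  have h := integrableOn_rpow_mul_exp_neg_mul_rpow (s := (m:ℝ)) (p := 1) (b := b)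
    (by exact_mod_cast neg_one_lt_zero.trans_le (Nat.cast_nonneg m)) zero_lt_one hb
  simpa [Real.rpow_natCast, Real.rpow_one, neg_mul] using h

lemma gamma_cast (n j k : ℕ) (hk : 1 ≤ k) :
    Real.Gamma ((n:ℝ) * (j:ℝ) + (k:ℝ)) = (Nat.factorial (n*j+k-1) : ℝ) := by
  have h1 : (n*j+k-1) + 1 = n*j+k := Nat.sub_add_cancel (hk.trans (Nat.le_add_left k (n*j)))
  have h2 := congrArg (fun m : ℕ => (m : ℝ)) h1
  push_cast at h2
  rw [← h2, Real.Gamma_nat_eq_factorial]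

lemma summA (x : ℝ) (n k : ℕ) (hk : 1 ≤ k) :
    Summable (fun j : ℕ =>
      x ^ j / ((Nat.factorial j : ℝ) * Real.Gamma ((n:ℝ) * (j:ℝ) + (k:ℝ)))) := by
  refine Summable.of_norm_bounded (Real.summable_pow_div_factorial |x|) fun j => ?_
  rw [gamma_cast n j k hk]
  have h1 : (1:ℝ) ≤ (Nat.factorial (n*j+k-1) : ℝ) := by
    exact_mod_cast Nat.one_le_iff_ne_zero.mpr (Nat.factorial_ne_zero _)
  have h2 : ‖x ^ j / ((Nat.factorial j : ℝ) * (Nat.factorial (n*j+k-1) : ℝ))‖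
      = |x| ^ j / ((Nat.factorial j : ℝ) * (Nat.factorial (n*j+k-1) : ℝ)) := by
    rw [norm_div, norm_pow, Real.norm_eq_abs, Real.norm_of_nonneg (by positivity)]
  rw [h2]
  refine div_le_div₀ (by positivity) le_rfl (by positivity) ?_
  exact le_mul_of_one_le_right (by positivity) h1

lemma summB (n p k : ℕ) (hn : 1 ≤ n) (hk : 1 ≤ k) {w : ℝ} (hw : 0 ≤ w) :
    Summable (fun j : ℕ => (Nat.factorial (p+j) : ℝ) * w ^ j /
      ((Nat.factorial j : ℝ) * (Nat.factorial (n*j+k-1) : ℝ))) := by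
  refine Summable.of_nonneg_of_le (fun j => by positivity) (fun j => ?_)
    ((Real.summable_pow_div_factorial (2*w)).mul_left ((2:ℝ)^p * (Nat.factorial p : ℝ)))
  have hfj : (Nat.factorial j : ℝ) ≤ (Nat.factorial (n*j+k-1) : ℝ) := by
    have hj : j ≤ n*j+k-1 := by
      have := Nat.le_mul_of_pos_left j (show 0 < n by omega)
      omega
    exact_mod_cast Nat.factorial_le hj
  have hch : Nat.factorial (p+j) ≤ 2^(p+j) * Nat.factorial p * Nat.factorial j := by
    have h1 : (p+j).choose p * Nat.factorial p * Nat.factorial j = Nat.factorial (p+j) := by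
      have := Nat.choose_mul_factorial_mul_factorial (Nat.le_add_right p j)
      simpa using this
    have h2 : (p+j).choose p ≤ 2^(p+j) := by
      calc (p+j).choose p ≤ ∑ m ∈ range (p+j+1), (p+j).choose m :=
            Finset.single_le_sum (fun i _ => Nat.zero_le _) (Finset.mem_range.2 (by omega))
        _ = 2^(p+j) := Nat.sum_range_choose _
    calc Nat.factorial (p+j) = (p+j).choose p * Nat.factorial p * Nat.factorial j := h1.symm
      _ ≤ 2^(p+j) * Nat.factorial p * Nat.factorial j :=
          Nat.mul_le_mul_right _ (Nat.mul_le_mul_right _ h2)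
  have key : (Nat.factorial (p+j) : ℝ) * w^j /
        ((Nat.factorial j : ℝ) * (Nat.factorial (n*j+k-1) : ℝ)) ≤
      ((2:ℝ)^(p+j) * (Nat.factorial p : ℝ) * (Nat.factorial j : ℝ)) * w^j /
        ((Nat.factorial j : ℝ) * (Nat.factorial j : ℝ)) := by
    refine div_le_div₀ (by positivity) ?_ (by positivity) ?_
    · refine mul_le_mul_of_nonneg_right ?_ (pow_nonneg hw j)
      exact_mod_cast hch
    · exact mul_le_mul_of_nonneg_left hfj (by positivity)
  refine key.trans (le_of_eq ?_)
  have hj : (Nat.factorial j : ℝ) ≠ 0 := by positivity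
  field_simp
  ring

/-- `p`-th moment of the inverse compound Poisson–Erlang
process `Y^{(n)}(t)`. -/
theorem stmt17 (lam β t : ℝ) (hlam : 0 < lam) (hβ : 0 < β) (ht : 0 ≤ t)
    (n : ℕ) (hn : 1 ≤ n) (p : ℕ) (hp : 1 ≤ p) :
    (∫ s in Set.Ioi (0 : ℝ),
      s ^ p *
        (lam * Real.exp (-(β * t) - lam * s) *
          ∑ k ∈ Finset.Icc 1 n,
            (β * t) ^ (k - 1) * wright (n : ℝ) (k : ℝ) (lam * s * (β * t) ^ n)))
    = Real.exp (-(β * t)) * ((Nat.factorial p : ℝ) / lam ^ p) *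
        ∑ k ∈ Finset.Icc 1 n,
          (β * t) ^ (k - 1) * ml3 ((p : ℝ) + 1) (n : ℝ) (k : ℝ) ((β * t) ^ n) := by
  have hz0 : (0:ℝ) ≤ β * t := by positivity
  have hw0 : (0:ℝ) ≤ (β * t) ^ n := by positivity
  set z : ℝ := β * t with hzdef
  set w : ℝ := z ^ n with hwdef
  set E : ℝ := Real.exp (-z) with hEdef
  have hE0 : 0 ≤ E := by rw [hEdef]; positivity
  have hlamne : lam ≠ 0 := ne_of_gt hlam
  set C : ℕ → ℕ → ℝ := fun k j => E * lam^(j+1) * w^j * z^(k-1) /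
    ((Nat.factorial j : ℝ) * (Nat.factorial (n*j+k-1) : ℝ)) with hC
  set I : ℕ → ℝ := fun j => (Nat.factorial (p+j) : ℝ) / lam^(p+j+1) with hI
  set G : ℕ → ℝ → ℝ := fun j s =>
    (∑ k ∈ Finset.Icc 1 n, C k j) * (s^(p+j) * Real.exp (-(lam * s))) with hG
  have hexp : ∀ s : ℝ, Real.exp (-z - lam * s) = E * Real.exp (-(lam*s)) := by
    intro s
    rw [sub_eq_add_neg, Real.exp_add, hEdef]
  -- pointwise identity
  have hpt : ∀ s : ℝ,
      s ^ p * (lam * Real.exp (-z - lam * s) *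
        ∑ k ∈ Finset.Icc 1 n, z ^ (k - 1) * wright (n : ℝ) (k : ℝ) (lam * s * w))
      = ∑' j : ℕ, G j s := by
    intro s
    have h2 : (∑ k ∈ Finset.Icc 1 n, z ^ (k-1) * wright (n:ℝ) (k:ℝ) (lam*s*w))
        = ∑' j : ℕ, ∑ k ∈ Finset.Icc 1 n, z^(k-1) *
            ((lam*s*w)^j / ((Nat.factorial j : ℝ) * Real.Gamma ((n:ℝ)*(j:ℝ)+(k:ℝ)))) := by
      rw [Summable.tsum_finsetSum (fun k hk =>
        (summA (lam*s*w) n k (Finset.mem_Icc.1 hk).1).mul_left _)]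
      refine Finset.sum_congr rfl fun k hk => ?_
      rw [show wright (n:ℝ) (k:ℝ) (lam*s*w) = ∑' j : ℕ,
        (lam*s*w)^j / ((Nat.factorial j : ℝ) * Real.Gamma ((n:ℝ)*(j:ℝ)+(k:ℝ))) from rfl,
        tsum_mul_left]
    rw [h2, ← tsum_mul_left (a := lam * Real.exp (-z - lam*s)), ← tsum_mul_left (a := s^p)]
    refine tsum_congr fun j => ?_
    simp only [hG, hC]
    rw [Finset.sum_mul, Finset.mul_sum, Finset.mul_sum]
    refine Finset.sum_congr rfl fun k hk => ?_
    rw [gamma_cast n j k (Finset.mem_Icc.1 hk).1, hexp s]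
    ring
  have hIntG : ∀ j : ℕ, IntegrableOn (G j) (Set.Ioi (0:ℝ)) := by
    intro j
    simp only [hG]
    exact (aux_integrable (p+j) hlam).const_mul _
  have hIntVal : ∀ j : ℕ, ∫ s in Set.Ioi (0:ℝ), G j s
      = (∑ k ∈ Finset.Icc 1 n, C k j) * I j := by
    intro j
    simp only [hG, hI]
    rw [integral_const_mul, aux_integral (p+j) hlam]
  have hCnonneg : ∀ k j, 0 ≤ C k j := by
    intro k j
    simp only [hC]
    refine div_nonneg ?_ (by positivity)
    exact mul_nonneg (mul_nonneg (mul_nonneg hE0 (pow_nonneg hlam.le _))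
      (pow_nonneg hw0 _)) (pow_nonneg hz0 _)
  have hnormVal : ∀ j : ℕ, ∫ s in Set.Ioi (0:ℝ), ‖G j s‖
      = (∑ k ∈ Finset.Icc 1 n, C k j) * I j := by
    intro j
    rw [← hIntVal j]
    refine setIntegral_congr_fun measurableSet_Ioi fun s hs => ?_
    have h1 : 0 ≤ G j s := by
      simp only [hG]
      exact mul_nonneg (Finset.sum_nonneg fun k _ => hCnonneg k j)
        (mul_nonneg (pow_nonneg (le_of_lt hs) _) (Real.exp_pos _).le)
    exact Real.norm_of_nonneg h1
  have hDsumm : ∀ k ∈ Finset.Icc 1 n, Summable (fun j : ℕ => C k j * I j) := by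
    intro k hk
    have hk1 := (Finset.mem_Icc.1 hk).1
    refine Summable.congr
      ((summB n p k hn hk1 hw0).mul_left (E * z^(k-1) / lam^p)) fun j => ?_
    simp only [hC, hI]
    have hj : (Nat.factorial j : ℝ) ≠ 0 := by positivity
    have hf2 : (Nat.factorial (n*j+k-1) : ℝ) ≠ 0 := by positivity
    field_simp
    ring
  have hSumNorm : Summable fun j : ℕ => ∫ s in Set.Ioi (0:ℝ), ‖G j s‖ := by
    refine Summable.congr ?_ fun j => (hnormVal j).symm
    have heq : (fun j : ℕ => (∑ k ∈ Finset.Icc 1 n, C k j) * I j)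
        = fun j : ℕ => ∑ k ∈ Finset.Icc 1 n, C k j * I j := by
      funext j; rw [Finset.sum_mul]
    rw [heq]
    exact (hasSum_sum fun k hk => (hDsumm k hk).hasSum).summable
  have hgp : ∀ j : ℕ, Real.Gamma ((p:ℝ)+1+(j:ℝ)) = (Nat.factorial (p+j) : ℝ) := by
    intro j
    rw [show (p:ℝ)+1+(j:ℝ) = ((p+j : ℕ):ℝ) + 1 by push_cast; ring,
      Real.Gamma_nat_eq_factorial]
  have hgp0 : Real.Gamma ((p:ℝ)+1) = (Nat.factorial p : ℝ) := Real.Gamma_nat_eq_factorial p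
  have hml : ∀ k ∈ Finset.Icc 1 n,
      E * ((Nat.factorial p : ℝ)/lam^p) * (z^(k-1) * ml3 ((p:ℝ)+1) (n:ℝ) (k:ℝ) w)
      = ∑' j : ℕ, C k j * I j := by
    intro k hk
    have hk1 := (Finset.mem_Icc.1 hk).1
    rw [show ml3 ((p:ℝ)+1) (n:ℝ) (k:ℝ) w = ∑' j : ℕ,
        (Real.Gamma ((p:ℝ)+1+(j:ℝ)) / Real.Gamma ((p:ℝ)+1)) * w^j /
          ((Nat.factorial j : ℝ) * Real.Gamma ((n:ℝ)*(j:ℝ)+(k:ℝ))) from rfl,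
      ← tsum_mul_left, ← tsum_mul_left]
    refine tsum_congr fun j => ?_
    rw [gamma_cast n j k hk1, hgp j, hgp0]
    simp only [hC, hI]
    have hj : (Nat.factorial j : ℝ) ≠ 0 := by positivity
    have hf2 : (Nat.factorial (n*j+k-1) : ℝ) ≠ 0 := by positivity
    have hfp : (Nat.factorial p : ℝ) ≠ 0 := by positivity
    field_simp
    ring
  calc (∫ s in Set.Ioi (0 : ℝ),
      s ^ p * (lam * Real.exp (-z - lam * s) *
        ∑ k ∈ Finset.Icc 1 n, z ^ (k - 1) * wright (n : ℝ) (k : ℝ) (lam * s * w)))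
      = ∫ s in Set.Ioi (0:ℝ), ∑' j : ℕ, G j s :=
        integral_congr_ae (Filter.Eventually.of_forall fun s => hpt s)
    _ = ∑' j : ℕ, ∫ s in Set.Ioi (0:ℝ), G j s :=
        (integral_tsum_of_summable_integral_norm (fun j => hIntG j) hSumNorm).symm
    _ = ∑' j : ℕ, ∑ k ∈ Finset.Icc 1 n, C k j * I j := by
        refine tsum_congr fun j => ?_
        rw [hIntVal j, Finset.sum_mul]
    _ = ∑ k ∈ Finset.Icc 1 n, ∑' j : ℕ, C k j * I j := Summable.tsum_finsetSum hDsumm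
    _ = E * ((Nat.factorial p : ℝ) / lam ^ p) *
          ∑ k ∈ Finset.Icc 1 n, z ^ (k - 1) * ml3 ((p : ℝ) + 1) (n : ℝ) (k : ℝ) w := by
        rw [Finset.mul_sum]
        exact Finset.sum_congr rfl fun k hk => (hml k hk).symm
end

section
/- For every integer n ≥ 1 and every real x ≥ 0, e^{-x} Σ_{k=1}^{n} x^{k-1} E^{2}_{n,k}(x^n) = x/n + (e^{-x}/n) Σ_{k=1}^{n} (n - k + 1) x^{k-1} E_{n,k}(x^n). (With x = β t, both sides multiplied by 1/λ give two expressions for the mean of the inverse compound Poisson–Erlang process Y^{(n)}(t).) -/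
open Real MeasureTheory Filter Finset

/-- Summability of `m ↦ m x^m / m!`. -/
lemma summable_mul_pow_div_factorial (x : ℝ) :
    Summable (fun m : ℕ => (m : ℝ) * x ^ m / (Nat.factorial m : ℝ)) := by
  rw [← summable_nat_add_iff 1]
  have : (fun m : ℕ => ((m + 1 : ℕ) : ℝ) * x ^ (m + 1) / (Nat.factorial (m + 1) : ℝ))
      = fun m : ℕ => x * (x ^ m / (Nat.factorial m : ℝ)) := by
    funext m
    rw [Nat.factorial_succ]
    have h1 : ((m : ℝ) + 1) ≠ 0 := by positivity
    push_cast
    field_simp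
    ring
  rw [this]
  exact (Real.summable_pow_div_factorial x).mul_left x

/-- `∑' m, m x^m / m! = x e^x`. -/
lemma tsum_mul_pow_div_factorial (x : ℝ) :
    ∑' m : ℕ, (m : ℝ) * x ^ m / (Nat.factorial m : ℝ) = x * Real.exp x := by
  rw [Summable.tsum_eq_zero_add (summable_mul_pow_div_factorial x)]
  have : (fun m : ℕ => ((m + 1 : ℕ) : ℝ) * x ^ (m + 1) / (Nat.factorial (m + 1) : ℝ))
      = fun m : ℕ => x * (x ^ m / (Nat.factorial m : ℝ)) := by
    funext m
    rw [Nat.factorial_succ]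
    have h1 : ((m : ℝ) + 1) ≠ 0 := by positivity
    push_cast
    field_simp
    ring
  simp only [this]
  rw [tsum_mul_left]
  have : Real.exp x = ∑' m : ℕ, x ^ m / (Nat.factorial m : ℝ) := by
    rw [Real.exp_eq_exp_ℝ, NormedSpace.exp_eq_tsum_div]
  rw [this]
  simp

/-- Reindexing a sum over `ℕ` as a double sum over quotient and remainder mod `n`. -/
lemma tsum_eq_sum_Icc_tsum (n : ℕ) (hn : 1 ≤ n) (f : ℕ → ℝ) (hf : Summable f) :
    ∑ k ∈ Finset.Icc 1 n, ∑' j : ℕ, f (n * j + (k - 1)) = ∑' m : ℕ, f m := by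
  haveI : NeZero n := ⟨by omega⟩
  -- reindex Icc 1 n to Fin n
  have step1 : ∑ k ∈ Finset.Icc 1 n, ∑' j : ℕ, f (n * j + (k - 1))
      = ∑ r : Fin n, ∑' j : ℕ, f (n * j + (r : ℕ)) := by
    rw [Fin.sum_univ_eq_sum_range (fun r => ∑' j : ℕ, f (n * j + r)) n]
    apply Finset.sum_nbij' (fun k => k - 1) (fun r => r + 1)
    · intro a ha; simp only [Finset.mem_Icc] at ha; simp only [Finset.mem_range]; omega
    · intro a ha; simp only [Finset.mem_range] at ha; simp only [Finset.mem_Icc]; omega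
    · intro a ha; simp only [Finset.mem_Icc] at ha; omega
    · intro a ha; omega
    · intro a ha; rfl
  rw [step1]
  -- the equivalence ℕ ≃ ℕ × Fin n
  let e : Fin n × ℕ ≃ ℕ :=
    (Equiv.prodComm (Fin n) ℕ).trans (Nat.divModEquiv n).symm
  have he : ∀ p : Fin n × ℕ, e p = p.2 * n + (p.1 : ℕ) := fun p => rfl
  have hsum : Summable (fun p : Fin n × ℕ => f (e p)) := hf.comp_injective e.injective
  have key : ∑' p : Fin n × ℕ, f (e p) = ∑' m : ℕ, f m := e.tsum_eq f
  rw [← key, Summable.tsum_prod' hsum (fun r => hsum.comp_injective (fun j j' h => by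
    simpa using congrArg Prod.snd h))]
  rw [tsum_fintype]
  apply Finset.sum_congr rfl
  intro r _
  apply tsum_congr
  intro j
  simp only [he]
  ring_nf

/-- two expressions for (λ times) the mean of the inverse
compound Poisson–Erlang process, at `x = β t`. -/
theorem stmt18 (n : ℕ) (hn : 1 ≤ n) (x : ℝ) (hx : 0 ≤ x) :
    Real.exp (-x) *
      (∑ k ∈ Finset.Icc 1 n, x ^ (k - 1) * ml3 2 (n : ℝ) (k : ℝ) (x ^ n))
    = x / (n : ℝ) +
      Real.exp (-x) / (n : ℝ) *
        ∑ k ∈ Finset.Icc 1 n,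
          ((n : ℝ) - (k : ℝ) + 1) * x ^ (k - 1) * ml2 (n : ℝ) (k : ℝ) (x ^ n) := by
  have hn0 : (n : ℝ) ≠ 0 := by positivity
  -- the two coefficient functions
  set g : ℕ → ℝ := fun m => ((m / n : ℕ) + 1 : ℝ) * x ^ m / (Nat.factorial m : ℝ) with hg
  set h : ℕ → ℝ := fun m => ((n : ℝ) - ((m % n : ℕ) : ℝ)) * x ^ m / (Nat.factorial m : ℝ)
    with hh
  -- summability
  have hsum1 := Real.summable_pow_div_factorial x
  have hsum2 := summable_mul_pow_div_factorial x
  have hsumg : Summable g := by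
    refine Summable.of_nonneg_of_le (fun m => ?_) (fun m => ?_) (hsum2.add hsum1)
    · have h0 : (0:ℝ) ≤ ((m / n : ℕ) : ℝ) + 1 := by positivity
      rw [hg]; positivity
    · have h1 : ((m / n : ℕ) : ℝ) ≤ (m : ℝ) := by exact_mod_cast Nat.div_le_self m n
      have h2 : (0:ℝ) ≤ x ^ m / (Nat.factorial m : ℝ) := by positivity
      calc g m = (((m / n : ℕ) : ℝ) + 1) * (x ^ m / (Nat.factorial m : ℝ)) := by
            rw [hg]; ring
        _ ≤ ((m : ℝ) + 1) * (x ^ m / (Nat.factorial m : ℝ)) := by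
            apply mul_le_mul_of_nonneg_right _ h2; linarith
        _ = (m : ℝ) * x ^ m / (Nat.factorial m : ℝ) + x ^ m / (Nat.factorial m : ℝ) := by ring
  have hsumh : Summable h := by
    refine Summable.of_nonneg_of_le (fun m => ?_) (fun m => ?_) (hsum1.mul_left (n:ℝ))
    · have hmn : ((m % n : ℕ) : ℝ) ≤ (n : ℝ) := by
        exact_mod_cast (Nat.mod_lt m (show 0 < n by omega)).le
      have h0 : (0:ℝ) ≤ (n : ℝ) - ((m % n : ℕ) : ℝ) := by linarith
      rw [hh]; positivity
    · have hmn : (0:ℝ) ≤ ((m % n : ℕ) : ℝ) := by positivity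
      have h2 : (0:ℝ) ≤ x ^ m / (Nat.factorial m : ℝ) := by positivity
      calc h m = ((n : ℝ) - ((m % n : ℕ) : ℝ)) * (x ^ m / (Nat.factorial m : ℝ)) := by
            rw [hh]; ring
        _ ≤ (n : ℝ) * (x ^ m / (Nat.factorial m : ℝ)) := by
            apply mul_le_mul_of_nonneg_right _ h2; linarith
        _ = (n : ℝ) * (x ^ m / (Nat.factorial m : ℝ)) := by ring
  -- rewrite the LHS inner terms
  have lhs_term : ∀ k ∈ Finset.Icc 1 n,
      x ^ (k - 1) * ml3 2 (n : ℝ) (k : ℝ) (x ^ n) = ∑' j : ℕ, g (n * j + (k - 1)) := by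
    intro k hk
    simp only [Finset.mem_Icc] at hk
    rw [ml3, ← tsum_mul_left]
    apply tsum_congr
    intro j
    have e1 : Real.Gamma (2 + (j : ℝ)) = (Nat.factorial (j + 1) : ℝ) := by
      have : (2 + (j : ℝ)) = ((j + 1 : ℕ) : ℝ) + 1 := by push_cast; ring
      rw [this, Real.Gamma_nat_eq_factorial]
    have e2 : Real.Gamma ((n : ℝ) * (j : ℝ) + (k : ℝ))
        = (Nat.factorial (n * j + (k - 1)) : ℝ) := by
      have : ((n : ℝ) * (j : ℝ) + (k : ℝ)) = ((n * j + (k - 1) : ℕ) : ℝ) + 1 := by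
        have hk1 : 1 ≤ k := hk.1
        push_cast [Nat.cast_sub hk1]
        ring
      rw [this, Real.Gamma_nat_eq_factorial]
    rw [e1, e2, Real.Gamma_two]
    have e3 : (x ^ n) ^ j = x ^ (n * j) := by rw [pow_mul]
    have e4 : x ^ (k - 1) * x ^ (n * j) = x ^ (n * j + (k - 1)) := by
      rw [← pow_add]; ring_nf
    have e5 : (Nat.factorial (j + 1) : ℝ) = ((j : ℝ) + 1) * (Nat.factorial j : ℝ) := by
      rw [Nat.factorial_succ]; push_cast; ring
    have ediv : (n * j + (k - 1)) / n = j := by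
      rw [Nat.mul_add_div (show 0 < n by omega), Nat.div_eq_of_lt (by omega), add_zero]
    have hfj : (Nat.factorial j : ℝ) ≠ 0 := by positivity
    have hfm : (Nat.factorial (n * j + (k - 1)) : ℝ) ≠ 0 := by positivity
    rw [hg]
    simp only [e3, e5, ediv, pow_add]
    field_simp
  -- rewrite the RHS inner terms
  have rhs_term : ∀ k ∈ Finset.Icc 1 n,
      ((n : ℝ) - (k : ℝ) + 1) * x ^ (k - 1) * ml2 (n : ℝ) (k : ℝ) (x ^ n)
        = ∑' j : ℕ, h (n * j + (k - 1)) := by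
    intro k hk
    simp only [Finset.mem_Icc] at hk
    rw [ml2, ← tsum_mul_left]
    apply tsum_congr
    intro j
    have e2 : Real.Gamma ((n : ℝ) * (j : ℝ) + (k : ℝ))
        = (Nat.factorial (n * j + (k - 1)) : ℝ) := by
      have : ((n : ℝ) * (j : ℝ) + (k : ℝ)) = ((n * j + (k - 1) : ℕ) : ℝ) + 1 := by
        push_cast [Nat.cast_sub hk.1]
        ring
      rw [this, Real.Gamma_nat_eq_factorial]
    rw [e2]
    have e3 : (x ^ n) ^ j = x ^ (n * j) := by rw [pow_mul]
    have e4 : x ^ (k - 1) * x ^ (n * j) = x ^ (n * j + (k - 1)) := by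
      rw [← pow_add]; ring_nf
    have e6 : (n * j + (k - 1)) % n = k - 1 := by
      rw [Nat.mul_add_mod]
      exact Nat.mod_eq_of_lt (by omega)
    have hfm : (Nat.factorial (n * j + (k - 1)) : ℝ) ≠ 0 := by positivity
    rw [hh]
    simp only [e3, e6, pow_add, Nat.cast_sub hk.1]
    push_cast
    field_simp
    ring
  rw [Finset.sum_congr rfl lhs_term, Finset.sum_congr rfl rhs_term,
    tsum_eq_sum_Icc_tsum n hn g hsumg, tsum_eq_sum_Icc_tsum n hn h hsumh]
  -- the key pointwise identity : n * g m = h m + m * x^m / m!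
  have key : (n : ℝ) * ∑' m : ℕ, g m
      = (∑' m : ℕ, h m) + ∑' m : ℕ, (m : ℝ) * x ^ m / (Nat.factorial m : ℝ) := by
    rw [← tsum_mul_left, ← Summable.tsum_add hsumh hsum2]
    apply tsum_congr
    intro m
    have hdm : n * (m / n) + m % n = m := Nat.div_add_mod m n
    have hcast : (n : ℝ) * ((m / n : ℕ) : ℝ) + ((m % n : ℕ) : ℝ) = (m : ℝ) := by
      exact_mod_cast congrArg (Nat.cast : ℕ → ℝ) hdm
    rw [hg, hh]
    have hfm : (Nat.factorial m : ℝ) ≠ 0 := by positivity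
    field_simp
    linear_combination x ^ m * hcast
  rw [tsum_mul_pow_div_factorial x] at key
  -- finish by algebra
  have hexp : Real.exp (-x) * Real.exp x = 1 := by
    rw [← Real.exp_add]; simp
  have hS : ∑' m : ℕ, g m = ((∑' m : ℕ, h m) + x * Real.exp x) / n := by
    field_simp
    linarith [key]
  rw [hS, Real.exp_neg]
  have he : Real.exp x ≠ 0 := Real.exp_ne_zero x
  field_simp
  ring
end

section
/- For every integer n ≥ 1, the function x ↦ e^{-x} Σ_{k=1}^{n} (n - k + 1) x^{k-1} E_{n,k}(x^n) tends to (n+1)/2 as x → ∞. Consequently, the mean of the inverse compound Poisson–Erlang process satisfies E[Y^{(n)}(t)] - β t/(n λ) → (n+1)/(2 n λ) as t → ∞. -/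
open Real MeasureTheory Filter Finset

noncomputable def s19_om (n : ℕ) : ℂ := Complex.exp (2 * Real.pi * Complex.I / n)

noncomputable def s19_cc (n j : ℕ) : ℂ :=
  (1 / n) * ∑ r ∈ Finset.range n, ((n : ℂ) - r) * ((s19_om n)⁻¹) ^ (j * r)

lemma s19_om_prim (n : ℕ) (hn : 1 ≤ n) : IsPrimitiveRoot (s19_om n) n :=
  Complex.isPrimitiveRoot_exp n (by omega)

lemma s19_geom_aux (n : ℕ) (hn : 1 ≤ n) (m r : ℕ) (hr : r < n) :
    ∑ j ∈ Finset.range n, (s19_om n ^ m / s19_om n ^ r) ^ j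
      = if m % n = r then (n : ℂ) else 0 := by
  have hprim := s19_om_prim n hn
  have h0 : s19_om n ≠ 0 := Complex.exp_ne_zero _
  have hpow : (s19_om n ^ m / s19_om n ^ r) ^ n = 1 := by
    rw [div_pow, ← pow_mul, ← pow_mul, mul_comm m n, mul_comm r n, pow_mul, pow_mul,
      hprim.pow_eq_one, one_pow, one_pow, div_one]
  have hmod : ∀ a : ℕ, s19_om n ^ a = s19_om n ^ (a % n) := by
    intro a
    conv_lhs => rw [← Nat.div_add_mod a n]
    rw [pow_add, pow_mul, hprim.pow_eq_one, one_pow, one_mul]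
  have hiff : s19_om n ^ m / s19_om n ^ r = 1 ↔ m % n = r := by
    rw [div_eq_one_iff_eq (pow_ne_zero _ h0), hmod m, hmod r,
      Nat.mod_eq_of_lt hr]
    exact ⟨fun h => hprim.pow_inj (Nat.mod_lt _ (by omega)) hr h, fun h => by rw [h]⟩
  by_cases h : m % n = r
  · rw [if_pos h]
    have h1 : s19_om n ^ m / s19_om n ^ r = 1 := hiff.mpr h
    simp [h1]
  · rw [if_neg h]
    have hune : s19_om n ^ m / s19_om n ^ r ≠ 1 := fun hu => h (hiff.mp hu)
    rw [geom_sum_eq hune, hpow]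
    simp

lemma s19_fourierW (n : ℕ) (hn : 1 ≤ n) (m : ℕ) :
    ((n : ℂ) - (m % n : ℕ)) = ∑ j ∈ Finset.range n, s19_cc n j * (s19_om n ^ j) ^ m := by
  symm
  have h0 : s19_om n ≠ 0 := Complex.exp_ne_zero _
  have hne : (n : ℂ) ≠ 0 := Nat.cast_ne_zero.mpr (by omega)
  have key : ∀ j r : ℕ, ((n:ℂ) - r) * ((s19_om n)⁻¹) ^ (j * r) * (s19_om n ^ j) ^ m
      = ((n:ℂ) - r) * (s19_om n ^ m / s19_om n ^ r) ^ j := by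
    intro j r
    rw [div_pow, ← pow_mul, ← pow_mul, inv_pow, ← pow_mul, div_eq_mul_inv,
      mul_comm m j, mul_comm r j]
    ring
  calc ∑ j ∈ Finset.range n, s19_cc n j * (s19_om n ^ j) ^ m
      = (1/(n:ℂ)) * ∑ j ∈ Finset.range n, ∑ r ∈ Finset.range n,
          ((n:ℂ) - r) * (s19_om n ^ m / s19_om n ^ r) ^ j := by
        rw [Finset.mul_sum]
        refine Finset.sum_congr rfl fun j _ => ?_
        rw [s19_cc, mul_assoc, Finset.sum_mul]
        congr 1
        exact Finset.sum_congr rfl fun r _ => key j r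
    _ = (1/(n:ℂ)) * ∑ r ∈ Finset.range n,
          ((n:ℂ) - r) * ∑ j ∈ Finset.range n, (s19_om n ^ m / s19_om n ^ r) ^ j := by
        rw [Finset.sum_comm]
        congr 1
        exact Finset.sum_congr rfl fun r _ => (Finset.mul_sum _ _ _).symm
    _ = (1/(n:ℂ)) * ∑ r ∈ Finset.range n,
          (if m % n = r then ((n:ℂ) - r) * n else 0) := by
        congr 1
        refine Finset.sum_congr rfl fun r hr => ?_
        rw [s19_geom_aux n hn m r (Finset.mem_range.mp hr), mul_ite, mul_zero]
    _ = ((n : ℂ) - (m % n : ℕ)) := by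
        rw [Finset.sum_ite_eq]
        rw [if_pos (Finset.mem_range.mpr (Nat.mod_lt _ (by omega)))]
        field_simp

lemma s19_series_eq (n : ℕ) (hn : 1 ≤ n) (x : ℝ) :
    ∑' m : ℕ, ((n : ℂ) - (m % n : ℕ)) * (x : ℂ) ^ m / (Nat.factorial m)
      = ∑ j ∈ Finset.range n, s19_cc n j * Complex.exp (s19_om n ^ j * x) := by
  have h1 : ∀ m : ℕ, ((n : ℂ) - (m % n : ℕ)) * (x : ℂ) ^ m / (Nat.factorial m)
      = ∑ j ∈ Finset.range n, s19_cc n j * ((s19_om n ^ j * x) ^ m / (Nat.factorial m)) := by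
    intro m
    rw [s19_fourierW n hn m, Finset.sum_mul, Finset.sum_div]
    refine Finset.sum_congr rfl fun j _ => ?_
    rw [mul_pow]
    ring
  rw [tsum_congr h1, Summable.tsum_finsetSum (fun j _ =>
    (NormedSpace.expSeries_div_summable (s19_om n ^ j * (x:ℂ))).mul_left (s19_cc n j))]
  refine Finset.sum_congr rfl fun j _ => ?_
  rw [tsum_mul_left, Complex.exp_eq_exp_ℂ, NormedSpace.exp_eq_tsum_div]

lemma s19_cc_zero (n : ℕ) (hn : 1 ≤ n) : s19_cc n 0 = ((n:ℂ) + 1) / 2 := by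
  have hne : (n : ℂ) ≠ 0 := Nat.cast_ne_zero.mpr (by omega)
  have hs : (∑ r ∈ Finset.range n, (r:ℂ)) * 2 = (n:ℂ) * ((n:ℂ) - 1) := by
    have h := Finset.sum_range_id_mul_two n
    calc (∑ r ∈ Finset.range n, (r:ℂ)) * 2 = (((∑ r ∈ Finset.range n, r) * 2 : ℕ) : ℂ) := by
          push_cast; ring
    _ = ((n * (n-1) : ℕ) : ℂ) := by rw [h]
    _ = (n:ℂ) * ((n:ℂ) - 1) := by
          push_cast [Nat.cast_sub hn]
          ring
  rw [s19_cc]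
  simp only [zero_mul, pow_zero, mul_one]
  rw [Finset.sum_sub_distrib, Finset.sum_const, Finset.card_range, nsmul_eq_mul]
  field_simp
  linear_combination -hs

lemma s19_step1 (n : ℕ) (x : ℝ) (i : ℕ) :
    x ^ i * ml2 (n : ℝ) ((1 + i : ℕ) : ℝ) (x ^ n)
      = ∑' j : ℕ, x ^ (j * n + i) / (Nat.factorial (j * n + i)) := by
  rw [ml2, ← tsum_mul_left]
  refine tsum_congr fun j => ?_
  have hg : Real.Gamma ((n:ℝ) * j + ((1 + i : ℕ) : ℝ)) = Nat.factorial (j * n + i) := by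
    have h : (n:ℝ) * j + ((1 + i : ℕ) : ℝ) = ((j * n + i : ℕ) : ℝ) + 1 := by
      push_cast; ring
    rw [h, Real.Gamma_nat_eq_factorial]
  rw [hg, ← pow_mul, mul_comm n j, ← mul_div_assoc, ← pow_add]
  congr 2
  omega

lemma s19_hsummable (n : ℕ) (hn : 1 ≤ n) (x : ℝ) :
    Summable (fun m : ℕ => ((n : ℝ) - (m % n : ℕ)) * x ^ m / (Nat.factorial m)) := by
  apply Summable.of_norm_bounded
    ((Real.summable_pow_div_factorial |x|).mul_left (n:ℝ))
  intro m
  have h1 : |((n:ℝ) - (m % n : ℕ))| ≤ n := by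
    rw [abs_le]
    have h2 : ((m % n : ℕ) : ℝ) ≤ n := by
      have := Nat.mod_lt m (show 0 < n by omega)
      exact_mod_cast this.le
    have h3 : (0:ℝ) ≤ ((m % n : ℕ) : ℝ) := Nat.cast_nonneg _
    constructor <;> linarith [Nat.cast_nonneg (α := ℝ) n]
  have h4 : (0:ℝ) < Nat.factorial m := Nat.cast_pos.mpr (Nat.factorial_pos m)
  rw [norm_eq_abs, abs_div, abs_mul, abs_pow, abs_of_pos h4, mul_div_assoc]
  exact mul_le_mul_of_nonneg_right h1 (by positivity)

lemma s19_real_sum_eq (n : ℕ) (hn : 1 ≤ n) (x : ℝ) :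
    ∑ k ∈ Finset.Icc 1 n, ((n:ℝ) - (k:ℝ) + 1) * x ^ (k - 1) * ml2 (n:ℝ) (k:ℝ) (x ^ n)
      = ∑' m : ℕ, ((n : ℝ) - (m % n : ℕ)) * x ^ m / (Nat.factorial m) := by
  have : NeZero n := ⟨by omega⟩
  set h : ℕ → ℝ := fun m => ((n : ℝ) - (m % n : ℕ)) * x ^ m / (Nat.factorial m) with hh
  have hsum : Summable h := s19_hsummable n hn x
  calc ∑ k ∈ Finset.Icc 1 n, ((n:ℝ) - (k:ℝ) + 1) * x ^ (k - 1) * ml2 (n:ℝ) (k:ℝ) (x ^ n)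
      = ∑ i ∈ Finset.range n, ∑' j : ℕ, h (j * n + i) := by
        rw [← Finset.Ico_add_one_right_eq_Icc, Finset.sum_Ico_eq_sum_range]
        simp only [Nat.add_sub_cancel]
        refine Finset.sum_congr rfl fun i hi => ?_
        have hi' : i < n := Finset.mem_range.mp hi
        have e1 : ((n:ℝ) - ((1 + i : ℕ):ℝ) + 1) = (n:ℝ) - i := by push_cast; ring
        have e2 : (1 + i) - 1 = i := by omega
        rw [e1, e2, mul_assoc, s19_step1 n x i, ← tsum_mul_left]
        refine tsum_congr fun j => ?_
        have e3 : (j * n + i) % n = i := by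
          rw [Nat.add_comm, Nat.add_mul_mod_self_right, Nat.mod_eq_of_lt hi']
        simp only [hh, e3]
        ring
    _ = ∑' m : ℕ, h m := by
        have hsum2 : Summable (fun p : Fin n × ℕ => h (p.2 * n + (p.1 : ℕ))) :=
          (((Equiv.prodComm (Fin n) ℕ).trans (Nat.divModEquiv n).symm).summable_iff
            (f := h)).mpr hsum
        have hinner : ∀ b : Fin n, Summable (fun j : ℕ => h (j * n + (b : ℕ))) := by
          intro b
          apply hsum.comp_injective
          intro j₁ j₂ hj
          simp only at hj
          have := Nat.add_right_cancel hj
          exact Nat.eq_of_mul_eq_mul_right (by omega) this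
        calc ∑ i ∈ Finset.range n, ∑' j : ℕ, h (j * n + i)
            = ∑ i : Fin n, ∑' j : ℕ, h (j * n + (i : ℕ)) :=
              (Fin.sum_univ_eq_sum_range (fun i => ∑' j : ℕ, h (j * n + i)) n).symm
          _ = ∑' (i : Fin n), ∑' j : ℕ, h (j * n + (i : ℕ)) := (tsum_fintype _).symm
          _ = ∑' (p : Fin n × ℕ), h (p.2 * n + (p.1 : ℕ)) :=
              (Summable.tsum_prod' hsum2 hinner).symm
          _ = ∑' m : ℕ, h m :=
              ((Equiv.prodComm (Fin n) ℕ).trans (Nat.divModEquiv n).symm).tsum_eq h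

lemma s19_re_lt_one (n : ℕ) (hn : 1 ≤ n) (j : ℕ) (hj : j ≠ 0) (hjn : j < n) :
    (s19_om n ^ j).re < 1 := by
  have hprim := s19_om_prim n hn
  have habs : ‖s19_om n ^ j‖ = 1 := by
    rw [norm_pow]
    have h1 : ‖s19_om n‖ = 1 := by
      rw [s19_om]
      have h2 : (2 * Real.pi * Complex.I / n) = ((2 * Real.pi / n : ℝ) : ℂ) * Complex.I := by
        push_cast; ring
      rw [h2, Complex.norm_exp_ofReal_mul_I]
    rw [h1, one_pow]
  have hne1 : s19_om n ^ j ≠ 1 := by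
    intro hone
    have hdvd := (hprim.pow_eq_one_iff_dvd j).mp hone
    exact absurd (Nat.le_of_dvd (by omega) hdvd) (by omega)
  have hle : (s19_om n ^ j).re ≤ 1 := by
    simpa [habs] using Complex.re_le_norm (s19_om n ^ j)
  rcases lt_or_eq_of_le hle with h | h
  · exact h
  · exfalso
    apply hne1
    have hsq := Complex.sq_norm (s19_om n ^ j)
    rw [habs, one_pow, Complex.normSq_apply] at hsq
    have him2 : (s19_om n ^ j).im * (s19_om n ^ j).im = 0 := by nlinarith
    have him : (s19_om n ^ j).im = 0 := by
      exact mul_self_eq_zero.mp him2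
    exact Complex.ext (by rw [h, Complex.one_re]) (by rw [him, Complex.one_im])

lemma s19_term_tendsto (n : ℕ) (hn : 1 ≤ n) (j : ℕ) (hjn : j ∈ Finset.range n) :
    Tendsto (fun x : ℝ => s19_cc n j * Complex.exp ((s19_om n ^ j - 1) * x)) atTop
      (nhds (if j = 0 then s19_cc n 0 else 0)) := by
  rcases eq_or_ne j 0 with rfl | hj
  · simp only [pow_zero, sub_self, zero_mul, Complex.exp_zero, mul_one, if_pos rfl]
    exact tendsto_const_nhds
  · rw [if_neg hj]
    have hre : (s19_om n ^ j).re < 1 := s19_re_lt_one n hn j hj (Finset.mem_range.mp hjn)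
    apply squeeze_zero_norm (a := fun x : ℝ => ‖s19_cc n j‖ * Real.exp (((s19_om n ^ j).re - 1) * x))
    · intro x
      rw [norm_mul, Complex.norm_exp]
      have h5 : ((s19_om n ^ j - 1) * (x:ℂ)).re = ((s19_om n ^ j).re - 1) * x := by
        simp [Complex.mul_re, Complex.sub_re, Complex.sub_im, Complex.one_re, Complex.one_im]
      rw [h5]
    · have h1 : Tendsto (fun x : ℝ => ((s19_om n ^ j).re - 1) * x) atTop atBot := by
        have h2 : Tendsto (fun x : ℝ => -((1 - (s19_om n ^ j).re) * x)) atTop atBot := by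
          apply tendsto_neg_atTop_atBot.comp
          exact tendsto_id.const_mul_atTop (by linarith)
        refine h2.congr fun x => by ring
      have h3 : Tendsto (fun x : ℝ => Real.exp (((s19_om n ^ j).re - 1) * x)) atTop (nhds 0) :=
        Real.tendsto_exp_atBot.comp h1
      simpa using h3.const_mul ‖s19_cc n j‖

lemma s19_main_limit (n : ℕ) (hn : 1 ≤ n) :
    Tendsto (fun x : ℝ => Real.exp (-x) *
        ∑ k ∈ Finset.Icc 1 n,
          ((n : ℝ) - (k : ℝ) + 1) * x ^ (k - 1) * ml2 (n : ℝ) (k : ℝ) (x ^ n))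
      atTop (nhds (((n : ℝ) + 1) / 2)) := by
  have hpt : ∀ x : ℝ, Real.exp (-x) *
      ∑ k ∈ Finset.Icc 1 n,
        ((n : ℝ) - (k : ℝ) + 1) * x ^ (k - 1) * ml2 (n : ℝ) (k : ℝ) (x ^ n)
      = (∑ j ∈ Finset.range n, s19_cc n j * Complex.exp ((s19_om n ^ j - 1) * x)).re := by
    intro x
    have hc : ((Real.exp (-x) * ∑ k ∈ Finset.Icc 1 n,
        ((n : ℝ) - (k : ℝ) + 1) * x ^ (k - 1) * ml2 (n : ℝ) (k : ℝ) (x ^ n) : ℝ) : ℂ)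
        = ∑ j ∈ Finset.range n, s19_cc n j * Complex.exp ((s19_om n ^ j - 1) * x) := by
      rw [s19_real_sum_eq n hn x, Complex.ofReal_mul, Complex.ofReal_exp, Complex.ofReal_tsum]
      have h6 : ∑' m : ℕ, ((((n : ℝ) - (m % n : ℕ)) * x ^ m / (Nat.factorial m) : ℝ) : ℂ)
          = ∑' m : ℕ, ((n : ℂ) - (m % n : ℕ)) * (x : ℂ) ^ m / (Nat.factorial m) := by
        refine tsum_congr fun m => ?_
        push_cast
        ring
      rw [h6, s19_series_eq n hn x, Finset.mul_sum]
      refine Finset.sum_congr rfl fun j _ => ?_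
      rw [mul_left_comm, ← Complex.exp_add]
      congr 2
      push_cast
      ring
    rw [← hc, Complex.ofReal_re]
  have hlim : Tendsto (fun x : ℝ =>
      ∑ j ∈ Finset.range n, s19_cc n j * Complex.exp ((s19_om n ^ j - 1) * x)) atTop
      (nhds (((n : ℂ) + 1) / 2)) := by
    have h7 := tendsto_finset_sum (Finset.range n) (fun j hj => s19_term_tendsto n hn j hj)
    have h8 : ∑ j ∈ Finset.range n, (if j = 0 then s19_cc n 0 else 0) = s19_cc n 0 := by
      rw [Finset.sum_ite_eq' (Finset.range n) 0 (fun _ => s19_cc n 0)]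
      exact if_pos (Finset.mem_range.mpr (by omega))
    rw [h8, s19_cc_zero n hn] at h7
    exact h7
  have h9 : Tendsto (fun x : ℝ =>
      (∑ j ∈ Finset.range n, s19_cc n j * Complex.exp ((s19_om n ^ j - 1) * x)).re) atTop
      (nhds ((((n : ℂ) + 1) / 2).re)) :=
    (Complex.continuous_re.tendsto _).comp hlim
  have h10 : (((n : ℂ) + 1) / 2).re = ((n : ℝ) + 1) / 2 := by
    have : ((n : ℂ) + 1) / 2 = (((((n : ℝ) + 1) / 2 : ℝ)) : ℂ) := by push_cast; ring
    rw [this, Complex.ofReal_re]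
  rw [h10] at h9
  exact h9.congr fun x => (hpt x).symm

/-- asymptotics of the mean of the inverse compound
Poisson–Erlang process: the correction term tends to `(n+1)/2` (resp.
`(n+1)/(2nλ)` for the mean itself, after subtracting the linear part). -/
theorem stmt19 (n : ℕ) (hn : 1 ≤ n) :
    Tendsto (fun x : ℝ => Real.exp (-x) *
        ∑ k ∈ Finset.Icc 1 n,
          ((n : ℝ) - (k : ℝ) + 1) * x ^ (k - 1) * ml2 (n : ℝ) (k : ℝ) (x ^ n))
      atTop (nhds (((n : ℝ) + 1) / 2)) ∧
    ∀ lam β : ℝ, 0 < lam → 0 < β →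
      Tendsto (fun t : ℝ =>
          (β * t / ((n : ℝ) * lam) +
            Real.exp (-(β * t)) / ((n : ℝ) * lam) *
              ∑ k ∈ Finset.Icc 1 n,
                ((n : ℝ) - (k : ℝ) + 1) * (β * t) ^ (k - 1) *
                  ml2 (n : ℝ) (k : ℝ) ((β * t) ^ n)) -
            β * t / ((n : ℝ) * lam))
        atTop (nhds (((n : ℝ) + 1) / (2 * (n : ℝ) * lam))) := by
  constructor
  · exact s19_main_limit n hn
  · intro lam β hlam hβ
    have hmul : Tendsto (fun t : ℝ => β * t) atTop atTop :=
      tendsto_id.const_mul_atTop hβ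
    have h1 := (s19_main_limit n hn).comp hmul
    have h2 := h1.mul_const (((n : ℝ) * lam)⁻¹)
    have hval : ((n : ℝ) + 1) / 2 * ((n : ℝ) * lam)⁻¹
        = ((n : ℝ) + 1) / (2 * (n : ℝ) * lam) := by
      rw [← div_eq_mul_inv, div_div, mul_assoc]
    rw [hval] at h2
    refine h2.congr fun t => ?_
    simp only [Function.comp]
    ring
end
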